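/- Let M be a loopless matroid of rank d+1 on a finite ground set E, and let v : E → ℝ be a vector such that for every chain F_1 ⊊ ⋯ ⊊ F_d of proper flats of M with rk_M(F_i) = i, the vector v lies in the ℝ-linear span of {1_{F_1}, …, 1_{F_d}, 1_E}. Then v(e) = v(f) whenever e and f are two elements of E contained in a common circuit of M; consequently v is constant on each connected component of M. -/

import Mathlib

/-- A circuit of a matroid is a minimal dependent set. -/
def Matroid.Circuit {α : Type*} (M : Matroid α) (C : Set α) : Prop :=
  M.Dep C ∧ ∀ D ⊂ C, ¬ M.Dep D

/-- A matroid is loopless if every singleton contained in the ground set is independent. -/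
def Matroid.Loopless' {α : Type*} (M : Matroid α) : Prop :=
  ∀ e ∈ M.E, M.Indep {e}

/-- The rank of a set `X` in a matroid: the supremum of the cardinalities of the
independent sets contained in `X`. -/
noncomputable def Matroid.rk {α : Type*} (M : Matroid α) (X : Set α) : ℕ :=
  sSup {n : ℕ | ∃ I, M.Indep I ∧ I ⊆ X ∧ I.ncard = n}

/-- Two elements are connected in `M` if some circuit of `M` contains both; the
connected components of `M` are the classes of the equivalence relation this generates. -/
def Matroid.ConnectedTo {α : Type*} (M : Matroid α) (e f : α) : Prop :=
  Relation.EqvGen (fun x y => ∃ C, M.Circuit C ∧ x ∈ C ∧ y ∈ C) e f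

private lemma flat_closure_aux {α : Type*} (M : Matroid α) (X : Set α) :
    M.IsFlat (M.closure X) := by
  have h : Nonempty {F : Set α // F ∈ {F | M.IsFlat F ∧ X ∩ M.E ⊆ F}} :=
    ⟨⟨M.E, M.ground_isFlat, Set.inter_subset_right⟩⟩
  rw [Matroid.closure_def, Set.sInter_eq_iInter]
  exact Matroid.IsFlat.iInter fun F => F.2.1

private lemma rk_eq_ncard_aux {α : Type*} {M : Matroid α} {I X : Set α}
    (hI : M.Indep I) (hIfin : I.Finite) (hIX : I ⊆ X) (hX : X ⊆ M.closure I) :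
    M.rk X = I.ncard := by
  have hub : ∀ n ∈ {n : ℕ | ∃ J, M.Indep J ∧ J ⊆ X ∧ J.ncard = n}, n ≤ I.ncard := by
    rintro n ⟨J, hJ, hJX, rfl⟩
    by_cases hJfin : J.Finite
    · by_contra hlt
      push_neg at hlt
      have henc : I.encard < J.encard := by
        rw [← hIfin.cast_ncard_eq, ← hJfin.cast_ncard_eq]
        exact_mod_cast hlt
      obtain ⟨x, hx, hxI⟩ := hI.augment hJ henc
      have hxcl : x ∈ M.closure I := hX (hJX hx.1)
      exact (hI.insert_dep_iff.mpr ⟨hxcl, hx.2⟩).not_indep hxI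
    · rw [Set.Infinite.ncard hJfin]
      exact Nat.zero_le _
  exact le_antisymm
    (csSup_le ⟨0, ∅, M.empty_indep, Set.empty_subset _, Set.ncard_empty _⟩ hub)
    (le_csSup ⟨I.ncard, hub⟩ ⟨I, hI, hIX, rfl⟩)

/-- Let `M` be a loopless matroid of rank `d + 1` on a finite ground
set and let `v` be a vector lying, for every full flag `F 0 ⊊ ⋯ ⊊ F (d-1)` of proper
flats with `rk (F i) = i + 1`, in the `ℝ`-linear span of the indicator vectors of the
flats of the flag together with the indicator vector of the ground set.  Then
`v e = v f` whenever `e` and `f` lie in a common circuit of `M`; consequently `v` is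
constant on each connected component of `M`. -/
theorem constant_on_components_of_mem_span_of_flags
    {α : Type*} {M : Matroid α} (hfin : M.E.Finite) (hloop : M.Loopless')
    {d : ℕ} (hrk : M.rk M.E = d + 1) (v : α → ℝ)
    (hv : ∀ F : Fin d → Set α, StrictMono F → (∀ i, M.IsFlat (F i)) → (∀ i, F i ≠ M.E) →
      (∀ i : Fin d, M.rk (F i) = (i : ℕ) + 1) →
      v ∈ Submodule.span ℝ (insert (Set.indicator M.E (1 : α → ℝ))
        (Set.range fun i => Set.indicator (F i) (1 : α → ℝ)))) :
    (∀ C, M.Circuit C → ∀ e ∈ C, ∀ f ∈ C, v e = v f) ∧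
    (∀ e f, M.ConnectedTo e f → v e = v f) := by
  have part1 : ∀ C, M.Circuit C → ∀ e ∈ C, ∀ f ∈ C, v e = v f := by
    intro C hC e he f hf
    classical
    by_cases hef : e = f
    · rw [hef]
    have hCE : C ⊆ M.E := hC.1.subset_ground
    have hCfin : C.Finite := hfin.subset hCE
    -- `C \ {e}` and `C \ {f}` are independent
    have hKind : M.Indep (C \ {e}) := by
      have h := hC.2 (C \ {e}) (Set.sdiff_singleton_ssubset.mpr he)
      rwa [M.not_dep_iff (Set.diff_subset.trans hCE)] at h
    have hIind : M.Indep (C \ {f}) := by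
      have h := hC.2 (C \ {f}) (Set.sdiff_singleton_ssubset.mpr hf)
      rwa [M.not_dep_iff (Set.diff_subset.trans hCE)] at h
    have hecl : e ∈ M.closure (C \ {e}) := by
      rw [hKind.mem_closure_iff_of_notMem (by simp)]
      rw [Set.insert_diff_singleton, Set.insert_eq_self.mpr he]
      exact hC.1
    set J : Set α := C \ {e, f} with hJdef
    have hJCe : (C \ {e}) \ {f} = J := by
      rw [Set.diff_diff, hJdef, Set.singleton_union]
    have hJCf : (C \ {f}) \ {e} = J := by
      rw [Set.diff_diff, hJdef, Set.singleton_union, Set.pair_comm]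
    have heJ : e ∉ M.closure J := by
      rw [← hJCf]
      exact hIind.notMem_closure_sdiff_of_mem ⟨he, fun h => hef h⟩
    have hfJ : f ∉ M.closure J := by
      rw [← hJCe]
      exact hKind.notMem_closure_sdiff_of_mem ⟨hf, fun h => hef (h : f = e).symm⟩
    have hfnJ : f ∉ J := fun h => h.2 (Or.inr rfl)
    have hKeq : insert f J = C \ {e} := by
      ext x
      constructor
      · rintro (h | ⟨hxC, hx⟩)
        · subst h; exact ⟨hf, fun h' => hef h'.symm⟩
        · exact ⟨hxC, fun h' => hx (Or.inl h')⟩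
      · rintro ⟨hxC, hxe⟩
        by_cases hxf : x = f
        · exact Or.inl hxf
        · exact Or.inr ⟨hxC, fun h' => h'.elim hxe hxf⟩
    obtain ⟨B, hB, hKB⟩ := hKind.exists_isBase_superset
    have hBE : B ⊆ M.E := hB.subset_ground
    have hBfin : B.Finite := hfin.subset hBE
    have hrkB : M.rk M.E = B.ncard :=
      rk_eq_ncard_aux hB.indep hBfin hBE (by rw [hB.closure_eq])
    have hBcard : B.ncard = d + 1 := by rw [← hrkB, hrk]
    have hJK : J ⊆ C \ {e} := by rw [← hKeq]; exact Set.subset_insert _ _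
    have hJfin : J.Finite := hCfin.subset Set.diff_subset
    set R : Set α := B \ (C \ {e}) with hRdef
    have hRfin : R.Finite := hBfin.subset Set.diff_subset
    set LJ : List α := hJfin.toFinset.toList with hLJdef
    set LR : List α := hRfin.toFinset.toList with hLRdef
    have hmemLJ : ∀ x, x ∈ LJ ↔ x ∈ J := fun x => by
      rw [hLJdef, Finset.mem_toList, Set.Finite.mem_toFinset]
    have hmemLR : ∀ x, x ∈ LR ↔ x ∈ R := fun x => by
      rw [hLRdef, Finset.mem_toList, Set.Finite.mem_toFinset]
    have hlenLJ : LJ.length = J.ncard := by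
      rw [hLJdef, Finset.length_toList, ← Set.ncard_eq_toFinset_card J hJfin]
    set L : List α := LJ ++ f :: LR with hLdef
    have hfK : f ∈ C \ {e} := ⟨hf, fun h => hef (h : f = e).symm⟩
    have hLnodup : L.Nodup := by
      rw [hLdef]
      refine List.Nodup.append (Finset.nodup_toList _) ?_ ?_
      · refine List.Nodup.cons ?_ (Finset.nodup_toList _)
        rw [hmemLR]
        exact fun h => h.2 hfK
      · intro x hx hx'
        rw [hmemLJ] at hx
        rcases List.mem_cons.mp hx' with rfl | hx'
        · exact hfnJ hx
        · rw [hmemLR] at hx'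
          exact hx'.2 (hJK hx)
    have hLlen : L.length = d + 1 := by
      rw [hLdef, List.length_append, List.length_cons, hlenLJ, hLRdef,
        Finset.length_toList, ← Set.ncard_eq_toFinset_card R hRfin]
      have h1 : (C \ {e}).ncard = J.ncard + 1 := by
        rw [← hKeq, Set.ncard_insert_of_notMem hfnJ hJfin]
      have h2 : R.ncard + (C \ {e}).ncard = B.ncard := by
        have h := Set.encard_diff_add_encard_of_subset hKB
        rw [← hRfin.cast_ncard_eq, ← (hCfin.subset Set.diff_subset).cast_ncard_eq,
          ← hBfin.cast_ncard_eq] at h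
        exact_mod_cast h
      omega
    set S : ℕ → Set α := fun i => {x | x ∈ L.take i} with hSdef
    have hSmono : ∀ {i j : ℕ}, i ≤ j → S i ⊆ S j := by
      intro i j hij x hx
      have heq : L.take i = (L.take j).take i := by
        rw [List.take_take, min_eq_left hij]
      have hx' : x ∈ L.take i := hx
      rw [heq] at hx'
      exact List.take_subset _ _ hx'
    have hSsubB : ∀ i, S i ⊆ B := by
      intro i x hx
      have hxL : x ∈ L := List.take_subset _ _ hx
      rw [hLdef, List.mem_append, List.mem_cons] at hxL
      rcases hxL with h | h | h
      · exact hKB (hJK ((hmemLJ x).mp h))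
      · subst h; exact hKB hfK
      · exact ((hmemLR x).mp h).1
    have hSind : ∀ i, M.Indep (S i) := fun i => hB.indep.subset (hSsubB i)
    have hSfin : ∀ i, (S i).Finite := fun i => hBfin.subset (hSsubB i)
    have hScard : ∀ i, i ≤ d + 1 → (S i).ncard = i := by
      intro i hi
      have h1 : S i = ((L.take i).toFinset : Set α) := by
        ext x; simp [hSdef, List.mem_toFinset]
      rw [h1, Set.ncard_coe_finset,
        List.toFinset_card_of_nodup ((List.take_sublist i L).nodup hLnodup),
        List.length_take, hLlen, min_eq_left hi]
    set m : ℕ := J.ncard with hmdef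
    have hSm : S m = J := by
      have hLm : L.take m = LJ := by
        rw [hLdef, ← hlenLJ, List.take_append_of_le_length le_rfl, List.take_length]
      rw [hSdef]
      show {x | x ∈ L.take m} = J
      rw [hLm]
      ext x
      exact hmemLJ x
    have hSm1 : S (m + 1) = C \ {e} := by
      have hL1 : L.take (m + 1) = LJ ++ [f] := by
        rw [hLdef, ← hlenLJ]
        have h := List.take_length_add_append (l₁ := LJ) (l₂ := f :: LR) 1
        simpa using h
      rw [hSdef]
      show {x | x ∈ L.take (m + 1)} = C \ {e}
      rw [hL1, ← hKeq]
      ext x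
      constructor
      · intro h
        rcases List.mem_append.mp h with h | h
        · exact Or.inr ((hmemLJ x).mp h)
        · exact Or.inl (List.mem_singleton.mp h)
      · rintro (rfl | h)
        · exact List.mem_append.mpr (Or.inr (List.mem_singleton.mpr rfl))
        · exact List.mem_append.mpr (Or.inl ((hmemLJ x).mpr h))
    have hmle : m + 1 ≤ d + 1 := by
      have h := Set.ncard_le_ncard hKB hBfin
      rw [hBcard, ← hKeq, Set.ncard_insert_of_notMem hfnJ hJfin] at h
      exact h
    set F : Fin d → Set α := fun i => M.closure (S (i.1 + 1)) with hFdef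
    have hrkF : ∀ i : Fin d, M.rk (F i) = (i : ℕ) + 1 := by
      intro i
      have hi := i.isLt
      have h := rk_eq_ncard_aux (hSind (i.1 + 1)) (hSfin _)
        (M.subset_closure _ ((hSsubB _).trans hBE)) subset_rfl
      rw [hFdef]
      show M.rk (M.closure (S (i.1 + 1))) = i.1 + 1
      rw [h, hScard _ (by omega)]
    have hFlat : ∀ i, M.IsFlat (F i) := fun i => flat_closure_aux M _
    have hFne : ∀ i, F i ≠ M.E := by
      intro i h
      have h2 := hrkF i
      rw [h, hrk] at h2
      have hi := i.isLt
      omega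
    have hFmono : StrictMono F := by
      intro i j hij
      have hlt : i.1 < j.1 := hij
      have hsub : F i ⊆ F j :=
        M.closure_subset_closure (hSmono (Nat.add_le_add_right hlt.le 1))
      refine hsub.ssubset_of_ne fun h => ?_
      have h1 := hrkF i
      have h2 := hrkF j
      rw [h] at h1
      rw [h1] at h2
      omega
    have hvmem := hv F hFmono hFlat hFne hrkF
    have hgen : ∀ w ∈ insert (Set.indicator M.E (1 : α → ℝ))
        (Set.range fun i => Set.indicator (F i) (1 : α → ℝ)), w e = w f := by
      rintro w (rfl | ⟨i, rfl⟩)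
      · rw [Set.indicator_of_mem (hCE he), Set.indicator_of_mem (hCE hf)]
        rfl
      · show Set.indicator (F i) 1 e = Set.indicator (F i) 1 f
        rcases le_or_gt (i.1 + 1) m with hile | hile
        · have hsub : F i ⊆ M.closure J :=
            M.closure_subset_closure (by rw [← hSm]; exact hSmono hile)
          rw [Set.indicator_of_notMem (fun h => heJ (hsub h)),
            Set.indicator_of_notMem (fun h => hfJ (hsub h))]
        · have hsub : C \ {e} ⊆ S (i.1 + 1) := by
            rw [← hSm1]; exact hSmono hile
          have hE : S (i.1 + 1) ⊆ M.E := (hSsubB _).trans hBE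
          have hein : e ∈ F i :=
            M.closure_subset_closure_of_subset_closure
              (M.subset_closure_of_subset hsub hE) hecl
          have hfin' : f ∈ F i := M.subset_closure _ hE (hsub hfK)
          rw [Set.indicator_of_mem hein, Set.indicator_of_mem hfin']
          rfl
    have hspan : Submodule.span ℝ (insert (Set.indicator M.E (1 : α → ℝ))
        (Set.range fun i => Set.indicator (F i) (1 : α → ℝ))) ≤
        LinearMap.ker ((LinearMap.proj e : (α → ℝ) →ₗ[ℝ] ℝ) - LinearMap.proj f) := by
      rw [Submodule.span_le]
      intro w hw
      rw [SetLike.mem_coe, LinearMap.mem_ker, LinearMap.sub_apply,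
        LinearMap.proj_apply, LinearMap.proj_apply, hgen w hw, sub_self]
    have hker := hspan hvmem
    rw [LinearMap.mem_ker, LinearMap.sub_apply, LinearMap.proj_apply,
      LinearMap.proj_apply, sub_eq_zero] at hker
    exact hker
  refine ⟨part1, fun e f h => ?_⟩
  induction h with
  | rel x y hxy => obtain ⟨C, hC, hx, hy⟩ := hxy; exact part1 C hC x hx y hy
  | refl x => rfl
  | symm _ _ _ ih => exact ih.symm
  | trans _ _ _ _ _ ih1 ih2 => exact ih1.trans ih2
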